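/- Let X₀, X₁, X₂, X₃ be Banach spaces, X₀ continuously embedded in X₁, U ⊆ X₁ open. Let f, f₁, …, f_k : U → X₂ have directional derivatives ∂_x f, ∂_x f_i for all x ∈ X₀, and let g : X₂ → X₃ be (k+1)-times strongly continuously Gâteaux differentiable. Then γ(u) := ∂^k_{f₁(u)…f_k(u)} g(f(u)) has directional derivative in every direction x ∈ X₀ with ∂_x γ(u) = ∂^{k+1}_{∂_x f(u), f₁(u), …, f_k(u)} g(f(u)) + Σ_{i=1}^k ∂^k_{f₁(u), …, ∂_x f_i(u), …, f_k(u)} g(f(u)). -/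

import Mathlib

open Filter Topology

theorem stmt8
    {X₀ X₁ X₂ X₃ : Type*}
    [NormedAddCommGroup X₀] [NormedSpace ℝ X₀] [CompleteSpace X₀]
    [NormedAddCommGroup X₁] [NormedSpace ℝ X₁] [CompleteSpace X₁]
    [NormedAddCommGroup X₂] [NormedSpace ℝ X₂] [CompleteSpace X₂]
    [NormedAddCommGroup X₃] [NormedSpace ℝ X₃] [CompleteSpace X₃]
    (ι : X₀ →L[ℝ] X₁) (hι : Function.Injective ι)
    (U : Set X₁) (hU : IsOpen U)
    (k : ℕ)
    (f : X₁ → X₂) (fs : Fin k → X₁ → X₂)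
    (Df : X₁ → X₀ → X₂) (Dfs : Fin k → X₁ → X₀ → X₂)
    (hDf : ∀ u ∈ U, ∀ x : X₀,
      Tendsto (fun t : ℝ => t⁻¹ • (f (u + t • ι x) - f u)) (𝓝[≠] 0) (𝓝 (Df u x)))
    (hDfs : ∀ i, ∀ u ∈ U, ∀ x : X₀,
      Tendsto (fun t : ℝ => t⁻¹ • (fs i (u + t • ι x) - fs i u)) (𝓝[≠] 0) (𝓝 (Dfs i u x)))
    (g : X₂ → X₃)
    (Dg : (j : ℕ) → X₂ → (Fin j → X₂) → X₃)
    (hDg0 : ∀ a v, Dg 0 a v = g a)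
    (hDgrec : ∀ j, j ≤ k → ∀ (a : X₂) (w : Fin (j+1) → X₂),
      Tendsto (fun t : ℝ => t⁻¹ • (Dg j (a + t • w (Fin.last j)) (w ∘ Fin.castSucc)
        - Dg j a (w ∘ Fin.castSucc))) (𝓝[≠] 0) (𝓝 (Dg (j+1) a w)))
    (hDgcont : ∀ j, j ≤ k + 1 → Continuous (fun p : X₂ × (Fin j → X₂) => Dg j p.1 p.2))
    (hDgmulti : ∀ j, j ≤ k + 1 → ∀ (a : X₂) (i : Fin j) (v : Fin j → X₂) (y y' : X₂) (c : ℝ),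
      Dg j a (Function.update v i (y + y'))
          = Dg j a (Function.update v i y) + Dg j a (Function.update v i y') ∧
      Dg j a (Function.update v i (c • y)) = c • Dg j a (Function.update v i y))
    (hDgsymm : ∀ j, j ≤ k + 1 → ∀ (a : X₂) (v : Fin j → X₂) (e : Equiv.Perm (Fin j)),
      Dg j a (v ∘ e) = Dg j a v)
    (γ : X₁ → X₃) (hγ : ∀ u, γ u = Dg k (f u) (fun i => fs i u))
    (u : X₁) (hu : u ∈ U) (x : X₀) :
    Tendsto (fun t : ℝ => t⁻¹ • (γ (u + t • ι x) - γ u)) (𝓝[≠] 0)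
      (𝓝 (Dg (k+1) (f u) (Fin.snoc (fun i => fs i u) (Df u x))
        + ∑ i : Fin k, Dg k (f u) (Function.update (fun i' => fs i' u) i (Dfs i u x)))) := by
  classical
  set a₀ : X₂ := f u with ha₀
  set v₀ : Fin k → X₂ := fun i => fs i u with hv₀def
  set q : ℝ → X₂ := fun t => if t = 0 then Df u x else t⁻¹ • (f (u + t • ι x) - f u) with hqdef
  set r : Fin k → ℝ → X₂ :=
    fun i t => if t = 0 then Dfs i u x else t⁻¹ • (fs i (u + t • ι x) - fs i u) with hrdef
  set v : ℝ → Fin k → X₂ := fun t i => fs i (u + t • ι x) with hvdef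
  have hq0 : q 0 = Df u x := if_pos rfl
  have hr0 : ∀ i, r i 0 = Dfs i u x := fun i => if_pos rfl
  -- continuity of the difference quotients at 0
  have hqt : Tendsto q (𝓝 0) (𝓝 (Df u x)) := by
    rw [← nhdsNE_sup_pure, tendsto_sup]
    constructor
    · refine Tendsto.congr' ?_ (hDf u hu x)
      filter_upwards [self_mem_nhdsWithin] with t ht
      exact (if_neg ht).symm
    · have := tendsto_pure_nhds q 0
      rwa [hq0] at this
  have hrt : ∀ i, Tendsto (r i) (𝓝 0) (𝓝 (Dfs i u x)) := by
    intro i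
    rw [← nhdsNE_sup_pure, tendsto_sup]
    constructor
    · refine Tendsto.congr' ?_ (hDfs i u hu x)
      filter_upwards [self_mem_nhdsWithin] with t ht
      exact (if_neg ht).symm
    · have := tendsto_pure_nhds (r i) 0
      rwa [hr0 i] at this
  -- the basic expansion formulas
  have hq_eq : ∀ t : ℝ, f (u + t • ι x) = a₀ + t • q t := by
    intro t
    by_cases ht : t = 0
    · simp [ht, hq0, ha₀]
    · rw [hqdef]
      simp only [if_neg ht]
      rw [smul_inv_smul₀ ht, ha₀, add_sub_cancel]
  have hv_eq : ∀ (t : ℝ) (i : Fin k), v t i = v₀ i + t • r i t := by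
    intro t i
    by_cases ht : t = 0
    · simp [ht, hvdef, hv₀def]
    · rw [hrdef]
      simp only [if_neg ht]
      rw [smul_inv_smul₀ ht, hv₀def, hvdef]
      simp
  have hv00 : v 0 = v₀ := by
    funext i
    simp [hvdef, hv₀def]
  have hvt : ∀ i : Fin k, Tendsto (fun t : ℝ => v t i) (𝓝 0) (𝓝 (v₀ i)) := by
    intro i
    have h1 : Tendsto (fun t : ℝ => v₀ i + t • r i t) (𝓝 0) (𝓝 (v₀ i + (0:ℝ) • Dfs i u x)) :=
      tendsto_const_nhds.add (tendsto_id.smul (hrt i))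
    simp only [zero_smul, add_zero] at h1
    exact h1.congr (fun t => (hv_eq t i).symm)
  have htq : Tendsto (fun t : ℝ => t • q t) (𝓝 0) (𝓝 (0 : X₂)) := by
    have h1 : Tendsto (fun t : ℝ => t • q t) (𝓝 0) (𝓝 ((0:ℝ) • Df u x)) :=
      tendsto_id.smul hqt
    simpa using h1
  -- multilinearity in the last slot of a snoc
  have hsnoc_smul : ∀ (b : X₂) (w : Fin k → X₂) (z : X₂) (c : ℝ),
      Dg (k+1) b (Fin.snoc w (c • z)) = c • Dg (k+1) b (Fin.snoc w z) := by
    intro b w z c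
    have h := (hDgmulti (k+1) le_rfl b (Fin.last k) (Fin.snoc w z) z z c).2
    rwa [Fin.update_snoc_last, Fin.update_snoc_last] at h
  -- F t s : the (k+1)-st derivative along the moving path
  set F : ℝ → ℝ → X₃ :=
    fun t s => Dg (k+1) (a₀ + s • (t • q t)) (Fin.snoc (v t) (q t)) with hFdef
  set L : X₃ := Dg (k+1) a₀ (Fin.snoc v₀ (Df u x)) with hLdef
  -- the auxiliary map paths have derivatives
  have hderiv : ∀ (t s : ℝ),
      HasDerivAt (fun s' : ℝ => Dg k (a₀ + s' • (t • q t)) (v t)) (t • F t s) s := by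
    intro t s
    have h1 := hDgrec k le_rfl (a₀ + s • (t • q t)) (Fin.snoc (v t) (t • q t))
    simp only [Fin.snoc_last, Fin.snoc_comp_castSucc] at h1
    rw [hsnoc_smul] at h1
    rw [hasDerivAt_iff_tendsto_slope]
    have h2 : Tendsto (fun s' : ℝ => s' - s) (𝓝[≠] s) (𝓝[≠] (0:ℝ)) := by
      refine tendsto_nhdsWithin_of_tendsto_nhds_of_eventually_within _ ?_ ?_
      · have h3 : Tendsto (fun s' : ℝ => s' - s) (𝓝 s) (𝓝 (s - s)) :=
          (continuous_id.sub continuous_const).tendsto s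
        rw [sub_self] at h3
        exact h3.mono_left nhdsWithin_le_nhds
      · filter_upwards [self_mem_nhdsWithin] with s' hs'
        exact sub_ne_zero.2 hs'
    have h3 := h1.comp h2
    refine Tendsto.congr ?_ h3
    intro s'
    have e1 : a₀ + s • (t • q t) + (s' - s) • (t • q t) = a₀ + s' • (t • q t) := by
      rw [sub_smul]; abel
    simp only [Function.comp_apply, e1, slope_fun_def, vsub_eq_sub]
  -- tube lemma: the derivative is close to L for small t, uniformly in s ∈ [0,1]
  have hc : Tendsto (fun t : ℝ => ((t • q t, v t, q t) : X₂ × (Fin k → X₂) × X₂)) (𝓝 0)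
      (𝓝 ((0 : X₂), v₀, Df u x)) := by
    refine Tendsto.prodMk_nhds htq (Tendsto.prodMk_nhds ?_ hqt)
    rw [tendsto_pi_nhds]
    exact hvt
  have hsnoc_cont : Continuous (fun p : (Fin k → X₂) × X₂ => (Fin.snoc p.1 p.2 : Fin (k+1) → X₂)) := by
    apply continuous_pi
    intro i
    refine Fin.lastCases ?_ ?_ i
    · simpa only [Fin.snoc_last] using (continuous_snd : Continuous fun p : (Fin k → X₂) × X₂ => p.2)
    · intro j
      simp only [Fin.snoc_castSucc]
      exact (continuous_apply j).comp continuous_fst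
  have hH : Continuous (fun P : (X₂ × (Fin k → X₂) × X₂) × ℝ =>
      Dg (k+1) (a₀ + P.2 • P.1.1) (Fin.snoc P.1.2.1 P.1.2.2)) := by
    refine (hDgcont (k+1) le_rfl).comp (Continuous.prodMk ?_ ?_)
    · exact continuous_const.add (continuous_snd.smul continuous_fst.fst)
    · exact hsnoc_cont.comp (continuous_fst.snd.fst.prodMk continuous_fst.snd.snd)
  have tube : ∀ ε > 0, ∀ᶠ t in 𝓝 (0:ℝ), ∀ s ∈ Set.Icc (0:ℝ) 1, ‖F t s - L‖ < ε := by
    intro ε hε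
    refine (isCompact_Icc (a := (0:ℝ)) (b := 1)).eventually_forall_of_forall_eventually ?_
    intro s hs
    have hT : Tendsto (fun z : ℝ × ℝ => ‖F z.1 z.2 - L‖) (𝓝 ((0:ℝ), s)) (𝓝 0) := by
      have hfst : Tendsto (fun z : ℝ × ℝ => z.1) (𝓝 ((0:ℝ), s)) (𝓝 (0:ℝ)) := continuousAt_fst
      have hsnd : Tendsto (fun z : ℝ × ℝ => z.2) (𝓝 ((0:ℝ), s)) (𝓝 s) := continuousAt_snd
      have h1 : Tendsto (fun z : ℝ × ℝ =>
          (((z.1 • q z.1, v z.1, q z.1), z.2) : (X₂ × (Fin k → X₂) × X₂) × ℝ))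
          (𝓝 ((0:ℝ), s)) (𝓝 ((((0:X₂), v₀, Df u x)), s)) :=
        Tendsto.prodMk_nhds (hc.comp hfst) hsnd
      have h2 : Tendsto (fun P : (X₂ × (Fin k → X₂) × X₂) × ℝ =>
            ‖Dg (k+1) (a₀ + P.2 • P.1.1) (Fin.snoc P.1.2.1 P.1.2.2) - L‖)
          (𝓝 ((((0:X₂), v₀, Df u x)), s))
          (𝓝 ‖Dg (k+1) (a₀ + s • (0:X₂)) (Fin.snoc v₀ (Df u x)) - L‖) :=
        ((hH.sub continuous_const).norm.tendsto _)
      have h3 := h2.comp h1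
      simpa [hLdef, hFdef, Function.comp_def] using h3
    exact hT.eventually_lt_const hε
  -- Part A : the base-point variation
  have hA : Tendsto (fun t : ℝ => t⁻¹ • (Dg k (f (u + t • ι x)) (v t) - Dg k a₀ (v t)))
      (𝓝[≠] 0) (𝓝 L) := by
    rw [Metric.tendsto_nhds]
    intro ε hε
    have htube := tube (ε/2) (by positivity)
    filter_upwards [htube.filter_mono nhdsWithin_le_nhds, eventually_mem_nhdsWithin] with t htb ht0
    have ht : t ≠ 0 := ht0
    -- mean value estimate on [0,1]
    have hD : ∀ s ∈ Set.Icc (0:ℝ) 1,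
        HasDerivWithinAt (fun s' : ℝ => Dg k (a₀ + s' • (t • q t)) (v t) - s' • (t • L))
          (t • F t s - t • L) (Set.Icc 0 1) s := by
      intro s _
      have h1 : HasDerivAt (fun s' : ℝ => s' • (t • L)) ((1:ℝ) • (t • L)) s :=
        (hasDerivAt_id s).smul_const (t • L)
      rw [one_smul] at h1
      exact ((hderiv t s).sub h1).hasDerivWithinAt
    have hbound : ∀ s ∈ Set.Icc (0:ℝ) 1, ‖t • F t s - t • L‖ ≤ |t| * (ε/2) := by
      intro s hs
      rw [← smul_sub, norm_smul, Real.norm_eq_abs]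
      exact mul_le_mul_of_nonneg_left (le_of_lt (htb s hs)) (abs_nonneg t)
    have key := Convex.norm_image_sub_le_of_norm_hasDerivWithin_le hD hbound (convex_Icc 0 1)
      (Set.left_mem_Icc.2 zero_le_one) (Set.right_mem_Icc.2 zero_le_one)
    have e1 : a₀ + t • q t = f (u + t • ι x) := (hq_eq t).symm
    simp only [one_smul, zero_smul, add_zero, sub_zero, norm_one, mul_one, e1] at key
    -- key : ‖Dg k (f (u + t • ι x)) (v t) - t • L - Dg k a₀ (v t)‖ ≤ |t| * (ε/2)
    rw [dist_eq_norm]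
    have e2 : t⁻¹ • (Dg k (f (u + t • ι x)) (v t) - Dg k a₀ (v t)) - L
        = t⁻¹ • (Dg k (f (u + t • ι x)) (v t) - t • L - Dg k a₀ (v t)) := by
      simp only [smul_sub, inv_smul_smul₀ ht]
      abel
    rw [e2]
    have e3 : ‖t⁻¹ • (Dg k (f (u + t • ι x)) (v t) - t • L - Dg k a₀ (v t))‖
        = |t|⁻¹ * ‖Dg k (f (u + t • ι x)) (v t) - t • L - Dg k a₀ (v t)‖ := by
      rw [norm_smul, Real.norm_eq_abs, abs_inv]
    rw [e3]
    have habs : (0:ℝ) < |t| := abs_pos.2 ht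
    calc |t|⁻¹ * ‖Dg k (f (u + t • ι x)) (v t) - t • L - Dg k a₀ (v t)‖
        ≤ |t|⁻¹ * (|t| * (ε/2)) := by
          exact mul_le_mul_of_nonneg_left key (inv_nonneg.2 (abs_nonneg t))
      _ = ε/2 := by field_simp
      _ < ε := by linarith
  -- Part B : the directions variation
  set W : ℝ → ℕ → Fin k → X₂ :=
    fun t n i => if (i:ℕ) < n then v t i else v₀ i with hWdef
  have hW0 : ∀ t, W t 0 = v₀ := by
    intro t; funext i; simp [hWdef]
  have hWk : ∀ t, W t k = v t := by
    intro t; funext i; simp [hWdef, i.isLt]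
  have step : ∀ (t : ℝ) (m : Fin k),
      Dg k a₀ (W t ((m:ℕ)+1)) - Dg k a₀ (W t (m:ℕ))
        = t • Dg k a₀ (Function.update (W t (m:ℕ)) m (r m t)) := by
    intro t m
    have e1 : W t ((m:ℕ)+1) = Function.update (W t (m:ℕ)) m (v₀ m + t • r m t) := by
      funext i
      rcases eq_or_ne i m with h | h
      · subst h
        rw [Function.update_self]
        show (if (i:ℕ) < (i:ℕ)+1 then v t i else v₀ i) = _
        rw [if_pos (Nat.lt_succ_self _)]
        exact hv_eq t i
      · rw [Function.update_of_ne h]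
        show (if (i:ℕ) < (m:ℕ)+1 then v t i else v₀ i)
            = (if (i:ℕ) < (m:ℕ) then v t i else v₀ i)
        have hne : (i:ℕ) ≠ (m:ℕ) := fun hc => h (Fin.ext hc)
        have : ((i:ℕ) < (m:ℕ)+1) ↔ ((i:ℕ) < (m:ℕ)) := by omega
        rw [if_congr this rfl rfl]
    have e2 : Function.update (W t (m:ℕ)) m (v₀ m) = W t (m:ℕ) := by
      have hval : v₀ m = W t (m:ℕ) m := by
        show v₀ m = (if (m:ℕ) < (m:ℕ) then v t m else v₀ m)
        rw [if_neg (lt_irrefl _)]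
      rw [hval, Function.update_eq_self]
    rw [e1, (hDgmulti k (Nat.le_succ k) a₀ m (W t (m:ℕ)) (v₀ m) (t • r m t) 1).1, e2,
      (hDgmulti k (Nat.le_succ k) a₀ m (W t (m:ℕ)) (r m t) (r m t) t).2]
    abel
  have tele : ∀ t : ℝ, Dg k a₀ (v t) - Dg k a₀ v₀
      = ∑ m : Fin k, t • Dg k a₀ (Function.update (W t (m:ℕ)) m (r m t)) := by
    intro t
    have h1 : ∑ n ∈ Finset.range k, (Dg k a₀ (W t (n+1)) - Dg k a₀ (W t n))
        = Dg k a₀ (W t k) - Dg k a₀ (W t 0) :=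
      Finset.sum_range_sub (fun n => Dg k a₀ (W t n)) k
    rw [hWk, hW0] at h1
    rw [← h1, ← Fin.sum_univ_eq_sum_range (fun n => Dg k a₀ (W t (n+1)) - Dg k a₀ (W t n)) k]
    exact Finset.sum_congr rfl fun m _ => step t m
  have hB : Tendsto (fun t : ℝ => t⁻¹ • (Dg k a₀ (v t) - Dg k a₀ v₀)) (𝓝[≠] 0)
      (𝓝 (∑ i : Fin k, Dg k a₀ (Function.update v₀ i (Dfs i u x)))) := by
    have hS : Tendsto
        (fun t : ℝ => ∑ m : Fin k, Dg k a₀ (Function.update (W t (m:ℕ)) m (r m t)))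
        (𝓝 0) (𝓝 (∑ m : Fin k, Dg k a₀ (Function.update v₀ m (Dfs m u x)))) := by
      refine tendsto_finset_sum _ fun m _ => ?_
      have harg : Tendsto
          (fun t : ℝ => ((a₀, Function.update (W t (m:ℕ)) m (r m t)) : X₂ × (Fin k → X₂)))
          (𝓝 0) (𝓝 ((a₀, Function.update v₀ m (Dfs m u x)) : X₂ × (Fin k → X₂))) := by
        refine Tendsto.prodMk_nhds tendsto_const_nhds ?_
        rw [tendsto_pi_nhds]
        intro j
        rcases eq_or_ne j m with h | h
        · subst h
          simpa only [Function.update_self] using hrt j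
        · simp only [Function.update_of_ne h]
          show Tendsto (fun t : ℝ => if (j:ℕ) < (m:ℕ) then v t j else v₀ j) (𝓝 0) (𝓝 (v₀ j))
          by_cases hj : (j:ℕ) < (m:ℕ)
          · simp only [if_pos hj]
            exact hvt j
          · simp only [if_neg hj]
            exact tendsto_const_nhds
      exact ((hDgcont k (Nat.le_succ k)).tendsto _).comp harg
    refine Tendsto.congr' ?_ (hS.mono_left nhdsWithin_le_nhds)
    filter_upwards [self_mem_nhdsWithin] with t ht0
    have ht : t ≠ 0 := ht0
    rw [tele t, Finset.smul_sum]
    exact Finset.sum_congr rfl fun m _ => (inv_smul_smul₀ ht _).symm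
  -- Combine
  have hsplit : (fun t : ℝ => t⁻¹ • (γ (u + t • ι x) - γ u))
      = fun t : ℝ => t⁻¹ • (Dg k (f (u + t • ι x)) (v t) - Dg k a₀ (v t))
          + t⁻¹ • (Dg k a₀ (v t) - Dg k a₀ v₀) := by
    funext t
    rw [hγ, hγ, ← smul_add, sub_add_sub_cancel]
  rw [hsplit]
  exact hA.add hB
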